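/- Let A be the 6×6 matrix with rows (0,0,1,0,0,0), (0,1,0,0,0,0), (1,−1,0,1,0,0), (0,1,−1,0,0,1), (0,0,1,−1,1,0), (0,0,0,1,0,0), viewed over ℚ. Then A is an alternating sign matrix, A has finite multiplicative order equal to 12, the minimum polynomial of A is (x−1)(x^4−x^2+1), and A is not similar over ℚ to any 6×6 permutation matrix. -/

import Mathlib

open Polynomial

/-- `Ccyc k` is the `k × k` companion matrix of `x^k - 1`: the permutation matrix with `1`
in (1-based) positions `(i+1, i)` for `1 ≤ i ≤ k-1` and in position `(1, k)`. -/
def Ccyc (k : ℕ) : Matrix (Fin k) (Fin k) ℚ :=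
  Matrix.of fun r c => if (r : ℕ) = ((c : ℕ) + 1) % k then 1 else 0

/-- `Tblock n i1 j1 i2 j2` is the `n × n` matrix with entry `1` in (1-based) positions
`(i1, j1)` and `(i2, j2)`, entry `-1` in positions `(i1, j2)` and `(i2, j1)`, and `0`
elsewhere. -/
def Tblock (n i1 j1 i2 j2 : ℕ) : Matrix (Fin n) (Fin n) ℚ :=
  Matrix.of fun r c =>
    (if (r : ℕ) + 1 = i1 ∧ (c : ℕ) + 1 = j1 then (1 : ℚ) else 0)
      + (if (r : ℕ) + 1 = i2 ∧ (c : ℕ) + 1 = j2 then (1 : ℚ) else 0)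
      - (if (r : ℕ) + 1 = i1 ∧ (c : ℕ) + 1 = j2 then (1 : ℚ) else 0)
      - (if (r : ℕ) + 1 = i2 ∧ (c : ℕ) + 1 = j1 then (1 : ℚ) else 0)

/-- Matrix direct sum (block diagonal sum), realized on `Fin (p + q)`. -/
def dsum {p q : ℕ} (A : Matrix (Fin p) (Fin p) ℚ) (B : Matrix (Fin q) (Fin q) ℚ) :
    Matrix (Fin (p + q)) (Fin (p + q)) ℚ :=
  Matrix.reindex finSumFinEquiv finSumFinEquiv (Matrix.fromBlocks A 0 0 B)

/-- A square rational matrix has finite multiplicative order if `A ^ t = 1` for some `t > 0`. -/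
def HasFinOrder {n : ℕ} (A : Matrix (Fin n) (Fin n) ℚ) : Prop :=
  ∃ t : ℕ, 0 < t ∧ A ^ t = 1

/-- `OrderIs A t` : `t` is the least positive integer with `A ^ t = 1`. -/
def OrderIs {n : ℕ} (A : Matrix (Fin n) (Fin n) ℚ) (t : ℕ) : Prop :=
  IsLeast {s : ℕ | 0 < s ∧ A ^ s = 1} t

/-- Alternating sign matrix: entries in `{0, 1, -1}`, all partial row- and column-sums equal
`0` or `1`, and every full row and column sums to `1`. -/
def IsASM {n : ℕ} (A : Matrix (Fin n) (Fin n) ℚ) : Prop :=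
  (∀ i j : Fin n, A i j = 0 ∨ A i j = 1 ∨ A i j = -1) ∧
  (∀ i k : Fin n, (∑ j ∈ Finset.Iic k, A i j) = 0 ∨ (∑ j ∈ Finset.Iic k, A i j) = 1) ∧
  (∀ j k : Fin n, (∑ i ∈ Finset.Iic k, A i j) = 0 ∨ (∑ i ∈ Finset.Iic k, A i j) = 1) ∧
  (∀ i : Fin n, (∑ j, A i j) = 1) ∧
  (∀ j : Fin n, (∑ i, A i j) = 1)

/-- Permutation matrix. -/
def IsPermMat {n : ℕ} (A : Matrix (Fin n) (Fin n) ℚ) : Prop :=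
  ∃ σ : Equiv.Perm (Fin n), ∀ i j, A i j = if σ i = j then 1 else 0

/-- `A` is permutation similar to an alternating sign matrix:
`Pᵀ * A * P` is an ASM for some permutation matrix `P`. -/
def PermSimilarToASM {n : ℕ} (A : Matrix (Fin n) (Fin n) ℚ) : Prop :=
  ∃ P B : Matrix (Fin n) (Fin n) ℚ, IsPermMat P ∧ IsASM B ∧ B = P.transpose * A * P

/-- Similarity over `ℚ`. -/
def SimilarQ {n : ℕ} (A B : Matrix (Fin n) (Fin n) ℚ) : Prop :=
  ∃ S : Matrix (Fin n) (Fin n) ℚ, IsUnit S ∧ B = S⁻¹ * A * S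

/-- A `T`-block: a matrix of the form `± T(i1, j1, i2, j2)` with `i1 ≠ i2`, `j1 ≠ j2`. -/
def IsTBlock {n : ℕ} (M : Matrix (Fin n) (Fin n) ℚ) : Prop :=
  ∃ i1 j1 i2 j2 : ℕ, 1 ≤ i1 ∧ i1 ≤ n ∧ 1 ≤ j1 ∧ j1 ≤ n ∧ 1 ≤ i2 ∧ i2 ≤ n ∧ 1 ≤ j2 ∧ j2 ≤ n ∧
    i1 ≠ i2 ∧ j1 ≠ j2 ∧ (M = Tblock n i1 j1 i2 j2 ∨ M = -Tblock n i1 j1 i2 j2)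


private def MZaux19 : Matrix (Fin 6) (Fin 6) ℤ := Matrix.of fun i j =>
  ![![0, 0, 1, 0, 0, 0], ![0, 1, 0, 0, 0, 0], ![1, -1, 0, 1, 0, 0],
    ![0, 1, -1, 0, 0, 1], ![0, 0, 1, -1, 1, 0], ![0, 0, 0, 1, 0, 0]] i j

private noncomputable def fQ19 : Matrix (Fin 6) (Fin 6) ℤ →+* Matrix (Fin 6) (Fin 6) ℚ :=
  (Int.castRingHom ℚ).mapMatrix

private lemma fQ19_inj : Function.Injective fQ19 := by
  intro X Y h
  ext i j
  have h2 := congrFun (congrFun (congrArg (fun M => (M : Matrix (Fin 6) (Fin 6) ℚ)) h) i) j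
  simp only [fQ19, RingHom.mapMatrix_apply, Matrix.map_apply, eq_intCast] at h2
  exact_mod_cast h2

private lemma fQ19_apply (X : Matrix (Fin 6) (Fin 6) ℤ) (i j : Fin 6) :
    fQ19 X i j = (X i j : ℚ) := by
  simp [fQ19, RingHom.mapMatrix_apply, Matrix.map_apply]

private lemma sixPerm19 (σ : Equiv.Perm (Fin 6)) (h : σ ^ 12 = 1) : σ ^ 4 = 1 ∨ σ ^ 6 = 1 := by
  by_contra hc
  push_neg at hc
  obtain ⟨h4, h6⟩ := hc
  have hd12 : orderOf σ ∣ 12 := orderOf_dvd_iff_pow_eq_one.mpr h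
  have hd4 : ¬ orderOf σ ∣ 4 := fun hh => h4 (orderOf_dvd_iff_pow_eq_one.mp hh)
  have hd6 : ¬ orderOf σ ∣ 6 := fun hh => h6 (orderOf_dvd_iff_pow_eq_one.mp hh)
  have hdeq : orderOf σ = 12 := by
    by_contra hne
    obtain ⟨n, hn⟩ : ∃ n, orderOf σ = n := ⟨_, rfl⟩
    rw [hn] at hd12 hd4 hd6 hne
    have hle : n ≤ 12 := Nat.le_of_dvd (by norm_num) hd12
    interval_cases n <;> omega
  have hlcm : σ.cycleType.lcm = 12 := by rw [Equiv.Perm.lcm_cycleType, hdeq]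
  have hsum : σ.cycleType.sum ≤ 6 := by
    rw [Equiv.Perm.sum_cycleType]
    simpa using Finset.card_le_univ σ.support
  have h4mem : ∃ a ∈ σ.cycleType, 4 ∣ a := by
    by_contra hc2
    push_neg at hc2
    have hl6 : σ.cycleType.lcm ∣ 6 := by
      rw [Multiset.lcm_dvd]
      intro b hb
      have hb12 : b ∣ 12 := hlcm ▸ Multiset.dvd_lcm hb
      have hb2 : 2 ≤ b := Equiv.Perm.two_le_of_mem_cycleType hb
      have hble : b ≤ 12 := Nat.le_of_dvd (by norm_num) hb12
      have hnb4 : ¬ 4 ∣ b := hc2 b hb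
      interval_cases b <;> omega
    rw [hlcm] at hl6
    omega
  obtain ⟨a, ha, ha4⟩ := h4mem
  have ha2 : 2 ≤ a := Equiv.Perm.two_le_of_mem_cycleType ha
  have hasum : a ≤ σ.cycleType.sum := Multiset.single_le_sum (fun x _ => Nat.zero_le x) _ ha
  have haeq : a = 4 := by omega
  subst haeq
  have hdvd4 : σ.cycleType.lcm ∣ 4 := by
    rw [Multiset.lcm_dvd]
    intro b hb
    have hb2 : 2 ≤ b := Equiv.Perm.two_le_of_mem_cycleType hb
    rcases eq_or_ne b 4 with rfl | hne
    · exact dvd_rfl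
    · have hbmem : b ∈ σ.cycleType.erase 4 := (Multiset.mem_erase_of_ne hne).mpr hb
      have hsb : 4 + b ≤ σ.cycleType.sum := by
        calc 4 + b ≤ 4 + (σ.cycleType.erase 4).sum :=
              Nat.add_le_add_left (Multiset.single_le_sum (fun x _ => Nat.zero_le x) _ hbmem) _
          _ = σ.cycleType.sum := by
              rw [← Multiset.sum_cons, Multiset.cons_erase ha]
      have hb2' : b = 2 := by omega
      subst hb2'
      norm_num
  rw [hlcm] at hdvd4
  omega

set_option maxRecDepth 8000 in
set_option maxHeartbeats 1600000 in
theorem stmt19 (A : Matrix (Fin 6) (Fin 6) ℚ)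
    (hA : A = !![0, 0, 1, 0, 0, 0;
                 0, 1, 0, 0, 0, 0;
                 1, -1, 0, 1, 0, 0;
                 0, 1, -1, 0, 0, 1;
                 0, 0, 1, -1, 1, 0;
                 0, 0, 0, 1, 0, 0]) :
    IsASM A ∧ OrderIs A 12 ∧
      minpoly ℚ A = (X - 1) * (X ^ 4 - X ^ 2 + 1) ∧
      ¬ ∃ B : Matrix (Fin 6) (Fin 6) ℚ, IsPermMat B ∧ SimilarQ A B := by
  have hAZ : A = fQ19 MZaux19 := by
    rw [hA]; ext i j
    rw [fQ19_apply]
    fin_cases i <;> fin_cases j <;> norm_num [MZaux19]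
  have hpow : ∀ k : ℕ, A ^ k = fQ19 (MZaux19 ^ k) := by
    intro k; rw [hAZ, map_pow]
  have hiff : ∀ k : ℕ, A ^ k = 1 ↔ MZaux19 ^ k = 1 := by
    intro k
    rw [hpow k]
    constructor
    · intro h; apply fQ19_inj; rw [h, map_one]
    · intro h; rw [h, map_one]
  have hA12 : A ^ 12 = 1 := (hiff 12).mpr (by decide)
  have hA4 : A ^ 4 ≠ 1 := fun h => absurd ((hiff 4).mp h) (by decide)
  have hA6 : A ^ 6 ≠ 1 := fun h => absurd ((hiff 6).mp h) (by decide)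
  have hent : ∀ (k : ℕ) (r s : Fin 6), (A ^ k) r s = (((MZaux19 ^ k) r s : ℤ) : ℚ) := by
    intro k r s; rw [hpow k]; rfl
  refine ⟨?_, ⟨⟨by norm_num, hA12⟩, ?_⟩, ?_, ?_⟩
  · -- IsASM
    have hent1 : ∀ i j, A i j = ((MZaux19 i j : ℤ) : ℚ) := by
      intro i j
      have := hent 1 i j
      rwa [pow_one, pow_one] at this
    obtain ⟨z1, z2, z3, z4, z5⟩ :
        (∀ i j : Fin 6, MZaux19 i j = 0 ∨ MZaux19 i j = 1 ∨ MZaux19 i j = -1) ∧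
        (∀ i k : Fin 6, (∑ j ∈ Finset.Iic k, MZaux19 i j) = 0 ∨
          (∑ j ∈ Finset.Iic k, MZaux19 i j) = 1) ∧
        (∀ j k : Fin 6, (∑ i ∈ Finset.Iic k, MZaux19 i j) = 0 ∨
          (∑ i ∈ Finset.Iic k, MZaux19 i j) = 1) ∧
        (∀ i : Fin 6, (∑ j, MZaux19 i j) = 1) ∧
        (∀ j : Fin 6, (∑ i, MZaux19 i j) = 1) := by
          unfold MZaux19; simp only [Matrix.of_apply]; decide
    refine ⟨fun i j => ?_, fun i k => ?_, fun j k => ?_, fun i => ?_, fun j => ?_⟩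
    · rw [hent1]
      rcases z1 i j with h | h | h <;> rw [h] <;> norm_num
    · have hq : (∑ j ∈ Finset.Iic k, A i j) = ((∑ j ∈ Finset.Iic k, MZaux19 i j : ℤ) : ℚ) := by
        push_cast; exact Finset.sum_congr rfl fun j _ => hent1 i j
      rw [hq]
      rcases z2 i k with h | h <;> rw [h] <;> norm_num
    · have hq : (∑ i ∈ Finset.Iic k, A i j) = ((∑ i ∈ Finset.Iic k, MZaux19 i j : ℤ) : ℚ) := by
        push_cast; exact Finset.sum_congr rfl fun i _ => hent1 i j
      rw [hq]
      rcases z3 j k with h | h <;> rw [h] <;> norm_num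
    · have hq : (∑ j, A i j) = ((∑ j, MZaux19 i j : ℤ) : ℚ) := by
        push_cast; exact Finset.sum_congr rfl fun j _ => hent1 i j
      rw [hq, z4 i]; norm_num
    · have hq : (∑ i, A i j) = ((∑ i, MZaux19 i j : ℤ) : ℚ) := by
        push_cast; exact Finset.sum_congr rfl fun i _ => hent1 i j
      rw [hq, z5 j]; norm_num
  · -- lower bound for the order
    rintro s ⟨hs0, hs1⟩
    by_contra hlt
    push_neg at hlt
    have hz := (hiff s).mp hs1
    interval_cases s <;> exact absurd hz (by decide)
  · -- minpoly
    set p : ℚ[X] := (X - 1) * (X ^ 4 - X ^ 2 + 1) with hp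
    have hmq : ((X : ℚ[X]) ^ 4 - X ^ 2 + 1).Monic := by monicity!
    have hm1 : ((X : ℚ[X]) - 1).Monic := by simpa using monic_X_sub_C (1 : ℚ)
    have hmp : p.Monic := hm1.mul hmq
    have hzz : (MZaux19 - 1) * (MZaux19 ^ 4 - MZaux19 ^ 2 + 1) = 0 := by decide
    have hqz : (A - 1) * (A ^ 4 - A ^ 2 + 1) = 0 := by
      have h2 := congrArg fQ19 hzz
      simpa only [map_mul, map_sub, map_add, map_pow, map_one, map_zero, ← hAZ] using h2
    have hp0 : aeval A p = 0 := by
      rw [hp]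
      simp only [map_mul, map_sub, map_add, map_pow, aeval_X, map_one]
      exact hqz
    have hint : IsIntegral ℚ A := ⟨p, hmp, by rwa [← Polynomial.aeval_def]⟩
    have hm : minpoly ℚ A ∣ p := minpoly.dvd ℚ A hp0
    have hpne : p ≠ 0 := hmp.ne_zero
    have hdegp : p.natDegree = 5 := by rw [hp]; compute_degree!
    have hdegm : (minpoly ℚ A).natDegree ≤ 5 := hdegp ▸ Polynomial.natDegree_le_of_dvd hm hpne
    have hmonm : (minpoly ℚ A).Monic := minpoly.monic hint
    by_cases hd : (minpoly ℚ A).natDegree = 5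
    · obtain ⟨c, hc⟩ := hm
      have hmne : minpoly ℚ A ≠ 0 := minpoly.ne_zero hint
      have hcne : c ≠ 0 := by rintro rfl; rw [mul_zero] at hc; exact hpne hc
      have hdc : c.natDegree = 0 := by
        have := Polynomial.natDegree_mul hmne hcne
        rw [← hc, hdegp, hd] at this
        omega
      have hcmon : c.Monic := by
        have hl := congrArg Polynomial.leadingCoeff hc
        rw [Polynomial.leadingCoeff_mul, Polynomial.leadingCoeff_mul, hmonm.leadingCoeff,
          hm1.leadingCoeff, hmq.leadingCoeff, one_mul, one_mul] at hl
        exact hl.symm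
      have hc1 : c = 1 := hcmon.natDegree_eq_zero.mp hdc
      rw [hc, hc1, mul_one]
    · exfalso
      have hlt : (minpoly ℚ A).natDegree < 5 := lt_of_le_of_ne hdegm hd
      have hs := Polynomial.aeval_eq_sum_range' hlt A
      rw [minpoly.aeval] at hs
      set c : ℕ → ℚ := fun i => (minpoly ℚ A).coeff i with hcdef
      have E : ∀ r s : Fin 6,
          c 0 * (((MZaux19 ^ 0) r s : ℤ) : ℚ) + c 1 * (((MZaux19 ^ 1) r s : ℤ) : ℚ)
          + c 2 * (((MZaux19 ^ 2) r s : ℤ) : ℚ) + c 3 * (((MZaux19 ^ 3) r s : ℤ) : ℚ)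
          + c 4 * (((MZaux19 ^ 4) r s : ℤ) : ℚ) = 0 := by
        intro r s
        have h2 := congrFun (congrFun hs.symm r) s
        simp only [Finset.sum_range_succ, Finset.sum_range_zero, zero_add,
          Matrix.add_apply, Matrix.smul_apply, smul_eq_mul, Matrix.zero_apply] at h2
        rw [hent 0, hent 1, hent 2, hent 3, hent 4] at h2
        exact h2
      have e1 := E 0 0
      have e2 := E 0 2
      have e3 := E 0 5
      have e4 := E 0 3
      have e5 := E 1 1
      rw [show ((MZaux19 ^ 0) (0:Fin 6) (0:Fin 6) : ℤ) = 1 from by decide,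
          show ((MZaux19 ^ 1) (0:Fin 6) (0:Fin 6) : ℤ) = 0 from by decide,
          show ((MZaux19 ^ 2) (0:Fin 6) (0:Fin 6) : ℤ) = 1 from by decide,
          show ((MZaux19 ^ 3) (0:Fin 6) (0:Fin 6) : ℤ) = 0 from by decide,
          show ((MZaux19 ^ 4) (0:Fin 6) (0:Fin 6) : ℤ) = 0 from by decide] at e1
      rw [show ((MZaux19 ^ 0) (0:Fin 6) (2:Fin 6) : ℤ) = 0 from by decide,
          show ((MZaux19 ^ 1) (0:Fin 6) (2:Fin 6) : ℤ) = 1 from by decide,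
          show ((MZaux19 ^ 2) (0:Fin 6) (2:Fin 6) : ℤ) = 0 from by decide,
          show ((MZaux19 ^ 3) (0:Fin 6) (2:Fin 6) : ℤ) = 0 from by decide,
          show ((MZaux19 ^ 4) (0:Fin 6) (2:Fin 6) : ℤ) = 0 from by decide] at e2
      rw [show ((MZaux19 ^ 0) (0:Fin 6) (5:Fin 6) : ℤ) = 0 from by decide,
          show ((MZaux19 ^ 1) (0:Fin 6) (5:Fin 6) : ℤ) = 0 from by decide,
          show ((MZaux19 ^ 2) (0:Fin 6) (5:Fin 6) : ℤ) = 0 from by decide,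
          show ((MZaux19 ^ 3) (0:Fin 6) (5:Fin 6) : ℤ) = 1 from by decide,
          show ((MZaux19 ^ 4) (0:Fin 6) (5:Fin 6) : ℤ) = 0 from by decide] at e3
      rw [show ((MZaux19 ^ 0) (0:Fin 6) (3:Fin 6) : ℤ) = 0 from by decide,
          show ((MZaux19 ^ 1) (0:Fin 6) (3:Fin 6) : ℤ) = 0 from by decide,
          show ((MZaux19 ^ 2) (0:Fin 6) (3:Fin 6) : ℤ) = 1 from by decide,
          show ((MZaux19 ^ 3) (0:Fin 6) (3:Fin 6) : ℤ) = 0 from by decide,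
          show ((MZaux19 ^ 4) (0:Fin 6) (3:Fin 6) : ℤ) = 1 from by decide] at e4
      rw [show ((MZaux19 ^ 0) (1:Fin 6) (1:Fin 6) : ℤ) = 1 from by decide,
          show ((MZaux19 ^ 1) (1:Fin 6) (1:Fin 6) : ℤ) = 1 from by decide,
          show ((MZaux19 ^ 2) (1:Fin 6) (1:Fin 6) : ℤ) = 1 from by decide,
          show ((MZaux19 ^ 3) (1:Fin 6) (1:Fin 6) : ℤ) = 1 from by decide,
          show ((MZaux19 ^ 4) (1:Fin 6) (1:Fin 6) : ℤ) = 1 from by decide] at e5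
      norm_num at e1 e2 e3 e4 e5
      have hc0 : c 0 = 0 := by linarith
      have hc1 : c 1 = 0 := by linarith
      have hc2 : c 2 = 0 := by linarith
      have hc3 : c 3 = 0 := by linarith
      have hc4 : c 4 = 0 := by linarith
      have hlead : c ((minpoly ℚ A).natDegree) = 1 := hmonm.coeff_natDegree
      interval_cases h : (minpoly ℚ A).natDegree <;>
        simp only [hc0, hc1, hc2, hc3, hc4] at hlead <;> exact zero_ne_one hlead
  · -- not similar to a permutation matrix
    rintro ⟨B, ⟨σ, hB⟩, S, hS, hSim⟩
    lift S to (Matrix (Fin 6) (Fin 6) ℚ)ˣ using hS with u hu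
    have hconj : ∀ k : ℕ, B ^ k =
        (↑u⁻¹ : Matrix (Fin 6) (Fin 6) ℚ) * A ^ k * (↑u : Matrix (Fin 6) (Fin 6) ℚ) := by
      intro k
      rw [hSim, ← Matrix.coe_units_inv, Units.conj_pow']
    have e : (↑u : Matrix (Fin 6) (Fin 6) ℚ) * (↑u⁻¹ : Matrix (Fin 6) (Fin 6) ℚ) = 1 :=
      u.mul_inv
    have hiffB : ∀ k : ℕ, A ^ k = 1 ↔ B ^ k = 1 := by
      intro k
      rw [hconj k]
      constructor
      · intro h; rw [h, mul_one]; exact u.inv_mul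
      · intro h
        calc A ^ k = ((↑u : Matrix (Fin 6) (Fin 6) ℚ) * ↑u⁻¹) * A ^ k * (↑u * ↑u⁻¹) := by
              rw [e, one_mul, mul_one]
          _ = ↑u * ((↑u⁻¹ : Matrix (Fin 6) (Fin 6) ℚ) * A ^ k * ↑u) * ↑u⁻¹ := by
              simp only [mul_assoc]
          _ = ↑u * 1 * ↑u⁻¹ := by rw [h]
          _ = 1 := by rw [mul_one, e]
    have hBmat : B = Matrix.of fun i j => if σ i = j then (1 : ℚ) else 0 := by
      ext i j; exact hB i j
    have hBpow : ∀ k : ℕ, B ^ k = Matrix.of fun i j => if (σ ^ k) i = j then (1 : ℚ) else 0 := by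
      intro k
      induction k with
      | zero => ext i j; simp [Matrix.one_apply]
      | succ n ih =>
          rw [pow_succ, ih, hBmat]
          ext i j
          rw [Matrix.mul_apply]
          simp only [Matrix.of_apply, ite_mul, one_mul, zero_mul, Finset.sum_ite_eq,
            Finset.mem_univ, if_true]
          rw [pow_succ']
          simp [Equiv.Perm.mul_apply]; congr
    have hiffσ : ∀ k : ℕ, B ^ k = 1 ↔ σ ^ k = 1 := by
      intro k
      rw [hBpow k]
      constructor
      · intro h
        apply Equiv.ext
        intro i
        have h2 := congrFun (congrFun h i) ((σ ^ k) i)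
        simp only [Matrix.of_apply, if_pos rfl, Matrix.one_apply] at h2
        by_cases hcc : i = (σ ^ k) i
        · simpa using hcc.symm
        · rw [if_neg hcc] at h2; exact absurd h2 one_ne_zero
      · intro h; rw [h]; ext i j; simp [Matrix.one_apply]; congr
    have hσ12 : σ ^ 12 = 1 := (hiffσ 12).mp ((hiffB 12).mp hA12)
    rcases sixPerm19 σ hσ12 with h | h
    · exact hA4 ((hiffB 4).mpr ((hiffσ 4).mpr h))
    · exact hA6 ((hiffB 6).mpr ((hiffσ 6).mpr h))
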